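/- Let A be a ℂ-subalgebra of the formal power series ring ℂ⟦t⟧ (Mathlib: PowerSeries ℂ) such that the quotient ℂ-vector space ℂ⟦t⟧ / A (quotient of ℂ-modules by the underlying submodule of A) is finite-dimensional. Then for every nonzero g ∈ A, the quotient ring A / (g·A) is a finite-dimensional ℂ-vector space whose dimension equals the t-adic order of g viewed as a power series: finrank ℂ (A ⧸ Ideal.span {g}) = ord_t(g). -/

import Mathlib

set_option synthInstance.maxHeartbeats 1000000
set_option maxHeartbeats 1000000

open PowerSeries in
private theorem quot_range_mul_finrank (G : PowerSeries ℂ) (hG : G ≠ 0) :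
    FiniteDimensional ℂ ((PowerSeries ℂ) ⧸ LinearMap.range (LinearMap.mulLeft ℂ G)) ∧
    Module.finrank ℂ ((PowerSeries ℂ) ⧸ LinearMap.range (LinearMap.mulLeft ℂ G))
      = (order G).lift (order_finite_iff_ne_zero.mpr hG) := by
  set n := (order G).lift (order_finite_iff_ne_zero.mpr hG) with hn
  have hdvd : ∀ x : PowerSeries ℂ, G ∣ x ↔ (X : PowerSeries ℂ) ^ n ∣ x := by
    intro x
    obtain ⟨v, hv⟩ := isUnit_divided_by_X_pow_order hG
    rw [← X_pow_order_mul_divXPowOrder (f := G), ← hv, Units.mul_right_dvd, hn,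
      ENat.lift_eq_toNat_of_lt_top]
  set φ : PowerSeries ℂ →ₗ[ℂ] (Fin n → ℂ) :=
    LinearMap.pi (fun i => PowerSeries.coeff (R := ℂ) (i : ℕ)) with hφ
  have hker : LinearMap.ker φ = LinearMap.range (LinearMap.mulLeft ℂ G) := by
    ext x
    simp only [LinearMap.mem_ker, LinearMap.mem_range, hφ, LinearMap.pi_apply, funext_iff]
    constructor
    · intro h
      have : G ∣ x := by
        rw [hdvd, X_pow_dvd_iff]
        intro m hm
        exact h ⟨m, hm⟩
      obtain ⟨c, hc⟩ := this
      exact ⟨c, by simp [LinearMap.mulLeft_apply, hc]⟩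
    · rintro ⟨y, rfl⟩ i
      have : G ∣ G * y := Dvd.intro _ rfl
      rw [hdvd, X_pow_dvd_iff] at this
      exact this i i.isLt
  have hsurj : Function.Surjective φ := by
    intro c
    refine ⟨∑ i : Fin n, (PowerSeries.C (R := ℂ) (c i)) * X ^ (i : ℕ), ?_⟩
    funext j
    simp only [hφ, LinearMap.pi_apply, map_sum, PowerSeries.coeff_C_mul, coeff_X_pow]
    rw [Finset.sum_eq_single j]
    · simp
    · intro i _ hij
      simp only [Fin.val_eq_val]
      rw [if_neg (fun h => hij h.symm)]
      simp
    · simp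
  have e := (LinearMap.quotKerEquivOfSurjective φ hsurj)
  rw [hker] at e
  constructor
  · exact e.symm.finiteDimensional
  · rw [e.finrank_eq, Module.finrank_fin_fun]

/-- For a `ℂ`-subalgebra `A` of `ℂ⟦t⟧` of finite colength, the quotient of `A` by the
principal ideal generated by a nonzero `g ∈ A` is a finite-dimensional `ℂ`-vector space
of dimension the `t`-adic order of `g`. -/
theorem stmt4 (A : Subalgebra ℂ (PowerSeries ℂ))
    (hA : FiniteDimensional ℂ (PowerSeries ℂ ⧸ Subalgebra.toSubmodule A))
    (g : A) (hg : g ≠ 0) :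
    FiniteDimensional ℂ (A ⧸ Ideal.span {g}) ∧
      (Module.finrank ℂ (A ⧸ Ideal.span {g}) : ℕ∞) =
        PowerSeries.order (g : PowerSeries ℂ) := by
  set R := PowerSeries ℂ
  set G : R := (g : R) with hGdef
  have hG : G ≠ 0 := fun h => hg (Subtype.ext h)
  set Lg : R →ₗ[ℂ] R := LinearMap.mulLeft ℂ G with hLg
  have hLgapp : ∀ x, Lg x = G * x := fun x => rfl
  have hLginj : Function.Injective Lg := by
    intro x y hxy
    rw [hLgapp, hLgapp] at hxy
    exact mul_left_cancel₀ hG hxy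
  set V : Submodule ℂ R := Subalgebra.toSubmodule A with hV
  set W : Submodule ℂ R := V.map Lg with hW
  set Gr : Submodule ℂ R := LinearMap.range Lg with hGr
  have hWV : W ≤ V := by
    rintro _ ⟨x, hx, rfl⟩
    rw [hLgapp]
    exact A.mul_mem g.2 hx
  have hWG : W ≤ Gr := Submodule.map_le_iff_le_comap.mpr (fun x _ => ⟨x, rfl⟩)
  set φ : R →ₗ[ℂ] (R ⧸ W) := W.mkQ.comp Lg with hφ
  have hkerφ : LinearMap.ker φ = V := by
    ext x
    simp only [hφ, LinearMap.mem_ker, LinearMap.comp_apply, Submodule.mkQ_apply,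
      Submodule.Quotient.mk_eq_zero]
    constructor
    · rintro ⟨y, hy, hyx⟩
      rwa [← hLginj hyx]
    · intro hx; exact ⟨x, hx, rfl⟩
  have hrangeφ : LinearMap.range φ = Gr.map W.mkQ := by
    rw [hφ, LinearMap.range_comp]
  set S : Submodule ℂ (R ⧸ W) := Gr.map W.mkQ with hS
  set S' : Submodule ℂ (R ⧸ W) := V.map W.mkQ with hS'
  have e1 : (R ⧸ V) ≃ₗ[ℂ] S :=
    (Submodule.quotEquivOfEq _ _ hkerφ.symm).trans
      ((φ.quotKerEquivRange).trans (LinearEquiv.ofEq _ _ hrangeφ))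
  have e2 : ((R ⧸ W) ⧸ S) ≃ₗ[ℂ] (R ⧸ Gr) :=
    Submodule.quotientQuotientEquivQuotient W Gr hWG
  have e2' : ((R ⧸ W) ⧸ S') ≃ₗ[ℂ] (R ⧸ V) :=
    Submodule.quotientQuotientEquivQuotient W V hWV
  set I : Ideal A := Ideal.span {g} with hI
  set ρ : A →ₗ[ℂ] (R ⧸ W) := W.mkQ.comp (A.val.toLinearMap) with hρ
  have hkerρ : LinearMap.ker ρ = I.restrictScalars ℂ := by
    ext a
    simp only [hρ, LinearMap.mem_ker, LinearMap.comp_apply, Submodule.mkQ_apply,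
      Submodule.Quotient.mk_eq_zero, Submodule.restrictScalars_mem, hI,
      Ideal.mem_span_singleton]
    constructor
    · rintro ⟨y, hy, hyx⟩
      refine ⟨⟨y, hy⟩, Subtype.ext ?_⟩
      have h1 : (↑(g * ⟨y, hy⟩) : R) = G * y := rfl
      rw [h1, ← hLgapp]
      exact hyx.symm
    · rintro ⟨c, rfl⟩
      exact ⟨(c : R), c.2, by rw [hLgapp]; rfl⟩
  have hrangeρ : LinearMap.range ρ = S' := by
    rw [hρ, LinearMap.range_comp]
    congr 1
    ext x
    simp only [LinearMap.mem_range, hV]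
    constructor
    · rintro ⟨a, rfl⟩; exact a.2
    · intro hx; exact ⟨⟨x, hx⟩, rfl⟩
  have e3 : (A ⧸ I) ≃ₗ[ℂ] S' :=
    ((Submodule.Quotient.restrictScalarsEquiv ℂ I).symm.trans
      ((Submodule.quotEquivOfEq _ _ hkerρ.symm).trans
        ((ρ.quotKerEquivRange).trans (LinearEquiv.ofEq _ _ hrangeρ))))
  obtain ⟨hfinGr, hrkGr⟩ := quot_range_mul_finrank G hG
  have hfinS : FiniteDimensional ℂ S := e1.finiteDimensional
  have hfinQS : FiniteDimensional ℂ ((R ⧸ W) ⧸ S) := e2.symm.finiteDimensional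
  have hfinM : FiniteDimensional ℂ (R ⧸ W) := by
    have h1 : IsNoetherian ℂ S := IsNoetherian.iff_fg.2 hfinS
    have h2 : IsNoetherian ℂ ((R ⧸ W) ⧸ S) := IsNoetherian.iff_fg.2 hfinQS
    exact IsNoetherian.iff_fg.1 ((isNoetherian_iff_submodule_quotient S).2 ⟨h1, h2⟩)
  have hfinS' : FiniteDimensional ℂ S' := FiniteDimensional.finiteDimensional_submodule S'
  have hfinAI : FiniteDimensional ℂ (A ⧸ I) := e3.symm.finiteDimensional
  have c1 : Module.finrank ℂ ((R ⧸ W) ⧸ S) + Module.finrank ℂ S = Module.finrank ℂ (R ⧸ W) :=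
    Submodule.finrank_quotient_add_finrank S
  have c2 : Module.finrank ℂ ((R ⧸ W) ⧸ S') + Module.finrank ℂ S' = Module.finrank ℂ (R ⧸ W) :=
    Submodule.finrank_quotient_add_finrank S'
  have d1 : Module.finrank ℂ ((R ⧸ W) ⧸ S) = Module.finrank ℂ (R ⧸ Gr) := e2.finrank_eq
  have d2 : Module.finrank ℂ S = Module.finrank ℂ (R ⧸ V) := e1.symm.finrank_eq
  have d3 : Module.finrank ℂ ((R ⧸ W) ⧸ S') = Module.finrank ℂ (R ⧸ V) := e2'.finrank_eq
  have d4 : Module.finrank ℂ S' = Module.finrank ℂ (A ⧸ I) := e3.symm.finrank_eq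
  have main : Module.finrank ℂ (A ⧸ I) = Module.finrank ℂ (R ⧸ Gr) := by omega
  refine ⟨hfinAI, ?_⟩
  rw [main, hrkGr, ENat.coe_lift]
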